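/- Let A, B, C, D be finite multisets on ℕ with |A ⊎ D| = |B ⊎ C|. Define A − C ≤ B − D to mean A ⊎ D ≤ B ⊎ C in the termwise order on multisets. Then this relation is transitive: if A − C ≤ B − D and B − D ≤ E − F (with the appropriate cardinality conditions), then A − C ≤ E − F. -/

import Mathlib

/-- Termwise order on finite multisets on ℕ: same cardinality, and the i-th
smallest element of `A` is at most the i-th smallest element of `B`. -/
noncomputable def twLE (A B : Multiset ℕ) : Prop :=
  Multiset.card A = Multiset.card B ∧
    ∀ i, (A.sort (· ≤ ·)).getD i 0 ≤ (B.sort (· ≤ ·)).getD i 0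

open List in
/-- For a `≤`-sorted list and a sublist, the i-th entry of the full list is at
most the i-th entry of the sublist. -/
lemma sorted_sublist_le {l f : List ℕ} (hl : l.Pairwise (· ≤ ·)) (hf : f <+ l)
    {i : ℕ} (hi : i < f.length) : l.getD i 0 ≤ f.getD i 0 := by
  obtain ⟨g, hg⟩ := List.sublist_iff_exists_fin_orderEmbedding_get_eq.mp hf
  have hlen : i < l.length := lt_of_lt_of_le hi hf.length_le
  have h1 : f.getD i 0 = l.get (g ⟨i, hi⟩) := by
    rw [List.getD_eq_getElem _ _ hi]; exact hg ⟨i, hi⟩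
  have key : ∀ k, ∀ j : Fin f.length, (j : ℕ) = k → k ≤ (g j : ℕ) := by
    intro k
    induction k with
    | zero => intro j _; exact Nat.zero_le _
    | succ k ih =>
      intro j hj
      have hkf : k < f.length := by omega
      have h1 : (⟨k, hkf⟩ : Fin f.length) < j := by
        simp [Fin.lt_def, hj]
      have h2 : g ⟨k, hkf⟩ < g j := g.strictMono h1
      have := ih ⟨k, hkf⟩ rfl
      have := Fin.lt_def.mp h2
      omega
  have h2 : (⟨i, hlen⟩ : Fin l.length) ≤ g ⟨i, hi⟩ := by
    have := key i ⟨i, hi⟩ rfl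
    simp [Fin.le_def, this]
  rw [List.getD_eq_getElem _ _ hlen, h1]
  exact hl.rel_get_of_le h2

open List in
lemma sorted_getD_lt_iff {l : List ℕ} (hl : l.Pairwise (· ≤ ·)) {i t : ℕ}
    (hi : i < l.length) :
    l.getD i 0 < t ↔ i < l.countP (fun a => decide (a < t)) := by
  constructor
  · intro h
    have htake : (l.take (i+1)).countP (fun a => decide (a < t)) = i + 1 := by
      rw [List.countP_eq_length.mpr, List.length_take, min_eq_left (by omega)]
      intro a ha
      obtain ⟨j, hj, rfl⟩ := List.mem_iff_getElem.mp ha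
      rw [List.getElem_take]
      simp only [decide_eq_true_eq]
      have hjl : j < l.length := by
        have := hj; rw [List.length_take] at this; omega
      have hle : l[j] ≤ l[i] := by
        rcases eq_or_lt_of_le (show j ≤ i by
          have := hj; rw [List.length_take] at this; omega) with h' | h'
        · subst h'; exact le_refl _
        · exact List.pairwise_iff_getElem.mp hl j i hjl hi h' 
      calc l[j] ≤ l[i] := hle
        _ < t := by rwa [List.getD_eq_getElem _ _ hi] at h
    calc i < i + 1 := Nat.lt_succ_self i
      _ = (l.take (i+1)).countP _ := htake.symm
      _ ≤ l.countP _ := (List.take_sublist _ _).countP_le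
  · intro h
    have hfl : i < (l.filter (fun a => decide (a < t))).length := by
      rwa [← List.countP_eq_length_filter]
    have := sorted_sublist_le hl (List.filter_sublist (l := l)) hfl
    have hmem : (l.filter (fun a => decide (a < t))).getD i 0 < t := by
      rw [List.getD_eq_getElem _ _ hfl]
      have := List.getElem_mem hfl
      have := List.of_mem_filter this
      simpa using this
    omega

lemma twLE_iff (A B : Multiset ℕ) :
    twLE A B ↔ Multiset.card A = Multiset.card B ∧
      ∀ t, Multiset.card (B.filter (· < t)) ≤ Multiset.card (A.filter (· < t)) := by
  have hconv : ∀ (M : Multiset ℕ) (t : ℕ),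
      Multiset.card (M.filter (· < t)) = (M.sort (· ≤ ·)).countP (fun a => decide (a < t)) := by
    intro M t
    conv_lhs => rw [← Multiset.sort_eq M (· ≤ ·)]
    rw [← Multiset.countP_eq_card_filter, Multiset.coe_countP]
  have hlen : ∀ (M : Multiset ℕ), (M.sort (· ≤ ·)).length = Multiset.card M :=
    fun M => Multiset.length_sort _
  have hsortA : (A.sort (· ≤ ·)).Pairwise (· ≤ ·) := Multiset.pairwise_sort _ _
  have hsortB : (B.sort (· ≤ ·)).Pairwise (· ≤ ·) := Multiset.pairwise_sort _ _
  constructor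
  · rintro ⟨hcard, h⟩
    refine ⟨hcard, fun t => ?_⟩
    rw [hconv, hconv]
    by_contra hc
    push_neg at hc
    set i := (A.sort (· ≤ ·)).countP (fun a => decide (a < t)) with hi
    have hib : i < (B.sort (· ≤ ·)).length := by
      have := (B.sort (· ≤ ·)).countP_le_length (p := fun a => decide (a < t))
      omega
    have hb : (B.sort (· ≤ ·)).getD i 0 < t := (sorted_getD_lt_iff hsortB hib).mpr hc
    have hia : i < (A.sort (· ≤ ·)).length := by rw [hlen, hcard, ← hlen]; exact hib
    have ha : (A.sort (· ≤ ·)).getD i 0 < t := lt_of_le_of_lt (h i) hb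
    have := (sorted_getD_lt_iff hsortA hia).mp ha
    omega
  · rintro ⟨hcard, h⟩
    refine ⟨hcard, fun i => ?_⟩
    by_cases hia : i < (A.sort (· ≤ ·)).length
    · have hib : i < (B.sort (· ≤ ·)).length := by rw [hlen, ← hcard, ← hlen]; exact hia
      set t := (B.sort (· ≤ ·)).getD i 0 + 1 with ht
      have hb : (B.sort (· ≤ ·)).getD i 0 < t := by omega
      have h1 : i < (B.sort (· ≤ ·)).countP (fun a => decide (a < t)) :=
        (sorted_getD_lt_iff hsortB hib).mp hb
      have h2 := h t
      rw [hconv, hconv] at h2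
      have h3 : i < (A.sort (· ≤ ·)).countP (fun a => decide (a < t)) := by omega
      have := (sorted_getD_lt_iff hsortA hia).mpr h3
      omega
    · push_neg at hia
      rw [List.getD_eq_default _ _ hia]
      exact Nat.zero_le _

/-- `A − C ≤ B − D` (defined as `A ⊎ D ≤ B ⊎ C`) is a transitive relation:
if `A − C ≤ B − D` and `B − D ≤ E − F` then `A − C ≤ E − F`. -/
theorem diff_le_trans (A B C D E F : Multiset ℕ)
    (h1 : twLE (A + D) (B + C)) (h2 : twLE (B + F) (E + D)) :
    twLE (A + F) (E + C) := by
  rw [twLE_iff] at h1 h2 ⊢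
  obtain ⟨hc1, h1⟩ := h1
  obtain ⟨hc2, h2⟩ := h2
  simp only [Multiset.filter_add, Multiset.card_add] at *
  refine ⟨by omega, fun t => ?_⟩
  have := h1 t
  have := h2 t
  omega
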